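/- Write vectors in R^11 as c = (c_0; c_{f_1},…,c_{f_5}; c_{g_1},…,c_{g_5}) and d = (d_0; d_{F_1},…,d_{F_5}; d_{G_1},…,d_{G_5}), and define the bilinear pairing P(c,d) = c_0 d_0 − Σ_{i=1}^{5} (c_{f_i} d_{G_i} + c_{g_i} d_{F_i}) + 4 Σ_{i=1}^{5} c_{g_i} d_{G_i}. Let S ⊂ R^11 be the set of all vectors obtained by permuting the indices {1,…,5} in: (0; 1,0,0,0,0; 0,0,0,0,0), (0; 2,0,0,0,0; 1,0,0,0,0), (1; 0,0,0,0,0; 0,0,0,0,0), (1; −1,−1,−1,−1,0; 0,0,0,0,0), (1; −3,−1,0,0,0; −1,0,0,0,0). Then each of the following vectors, and every index-permutation thereof, satisfies P(s, d) ≥ 0 for all s ∈ S: d = (1; −2,0,0,0,0; −1,0,0,0,0), (1; −1,−1,−1,−1,−1; 0,0,0,0,0), (2; −2,−2,−1,−1,−1; −1,−1,0,0,0), (3; −3,−3,−3,−2,−2; −1,−1,−1,0,0), (4; −4,−4,−4,−4,−4; −1,−1,−1,−1,−1). -/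

import Mathlib

/-- Numerical classes of 2-cycles (resp. codimension-2 classes) on the blowup of
P^5 along 5 general lines, written as vectors `(c₀; c_{f₁},…,c_{f₅}; c_{g₁},…,c_{g₅})`
(resp. `(d₀; d_{F₁},…,d_{F₅}; d_{G₁},…,d_{G₅})`). -/
abbrev Vec11 : Type := ℝ × (Fin 5 → ℝ) × (Fin 5 → ℝ)

/-- The intersection pairing
`P(c,d) = c₀ d₀ − Σᵢ (c_{fᵢ} d_{Gᵢ} + c_{gᵢ} d_{Fᵢ}) + 4 Σᵢ c_{gᵢ} d_{Gᵢ}`. -/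
def interPair11 (c d : Vec11) : ℝ :=
  c.1 * d.1 - (∑ i : Fin 5, (c.2.1 i * d.2.2 i + c.2.2 i * d.2.1 i))
    + 4 * ∑ i : Fin 5, c.2.2 i * d.2.2 i

/-- The action of a permutation of the indices `{1,…,5}` on a vector. -/
def permVec11 (σ : Equiv.Perm (Fin 5)) (v : Vec11) : Vec11 :=
  (v.1, v.2.1 ∘ σ, v.2.2 ∘ σ)

/-- The classes of linear 2-dimensional subvarieties: all index-permutations of the
five listed vectors. -/
def linClasses11 : Set Vec11 :=
  {w | ∃ σ : Equiv.Perm (Fin 5), w = permVec11 σ (0, ![1,0,0,0,0], ![0,0,0,0,0]) ∨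
    w = permVec11 σ (0, ![2,0,0,0,0], ![1,0,0,0,0]) ∨
    w = permVec11 σ (1, ![0,0,0,0,0], ![0,0,0,0,0]) ∨
    w = permVec11 σ (1, ![-1,-1,-1,-1,0], ![0,0,0,0,0]) ∨
    w = permVec11 σ (1, ![-3,-1,0,0,0], ![-1,0,0,0,0])}

/-- The maximally incident generators α, β, γ, δ, ε, together with all their
index-permutations. -/
def maxIncident11 : Set Vec11 :=
  {w | ∃ σ : Equiv.Perm (Fin 5), w = permVec11 σ (1, ![-2,0,0,0,0], ![-1,0,0,0,0]) ∨
    w = permVec11 σ (1, ![-1,-1,-1,-1,-1], ![0,0,0,0,0]) ∨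
    w = permVec11 σ (2, ![-2,-2,-1,-1,-1], ![-1,-1,0,0,0]) ∨
    w = permVec11 σ (3, ![-3,-3,-3,-2,-2], ![-1,-1,-1,0,0]) ∨
    w = permVec11 σ (4, ![-4,-4,-4,-4,-4], ![-1,-1,-1,-1,-1])}

section Aux

open Finset

lemma sumPerm5 (a x : Fin 5 → ℝ) (τ : Equiv.Perm (Fin 5)) :
    ∑ i : Fin 5, a (τ i) * x i = ∑ j : Fin 5, a j * x (τ.symm j) := by
  rw [← Equiv.sum_comp τ (fun j => a j * x (τ.symm j))]
  simp

/-- The linear inequalities on `d` that suffice for nonnegative pairing with all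
linear classes. -/
def Good11 (d : Vec11) : Prop :=
  0 ≤ d.1 ∧ (∀ i, d.2.2 i ≤ 0) ∧ (∀ i, 0 ≤ 2 * d.2.2 i - d.2.1 i) ∧
  (∀ m, 0 ≤ d.1 + (∑ i : Fin 5, d.2.2 i) - d.2.2 m) ∧
  (∀ j k, j ≠ k → 0 ≤ d.1 - d.2.2 j + d.2.2 k + d.2.1 j)

lemma good_perm (σ : Equiv.Perm (Fin 5)) (d : Vec11) (h : Good11 d) :
    Good11 (permVec11 σ d) := by
  obtain ⟨h0, hG, h2, h4, hL⟩ := h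
  refine ⟨h0, fun i => hG (σ i), fun i => h2 (σ i), fun m => ?_,
    fun j k hjk => hL (σ j) (σ k) (fun e => hjk (σ.injective e))⟩
  have hs : ∑ i : Fin 5, (permVec11 σ d).2.2 i = ∑ i : Fin 5, d.2.2 i :=
    Equiv.sum_comp σ d.2.2
  show 0 ≤ d.1 + ∑ i : Fin 5, (permVec11 σ d).2.2 i - d.2.2 (σ m)
  rw [hs]; exact h4 (σ m)

lemma good_pair (d : Vec11) (hd : Good11 d) :
    ∀ s ∈ linClasses11, 0 ≤ interPair11 s d := by
  obtain ⟨h0, hG, h2, h4, hL⟩ := hd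
  rintro s ⟨τ, h | h | h | h | h⟩ <;> subst h <;>
    · unfold interPair11 permVec11
      simp only [Function.comp]
      rw [Finset.sum_add_distrib]
      simp only [sumPerm5]
      simp only [Fin.sum_univ_five, Matrix.cons_val_zero, Matrix.cons_val_one,
        Matrix.head_cons, Matrix.cons_val_two, Matrix.tail_cons, Matrix.cons_val_three,
        Matrix.cons_val_four]
      first
      | linarith [hG (τ.symm 0)]
      | linarith [h2 (τ.symm 0)]
      | linarith [h0]
      | (have key := h4 (τ.symm 4)
         have hs : ∑ i : Fin 5, d.2.2 i = ∑ j : Fin 5, d.2.2 (τ.symm j) :=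
           (Equiv.sum_comp τ.symm d.2.2).symm
         rw [hs, Fin.sum_univ_five] at key
         linarith)
      | (have key := hL (τ.symm 0) (τ.symm 1)
           (fun e => (by norm_num : (0:Fin 5) ≠ 1) (τ.symm.injective e))
         linarith)

lemma goodA : Good11 ((1, ![-2,0,0,0,0], ![-1,0,0,0,0]) : Vec11) := by
  refine ⟨by norm_num, ?_, ?_, ?_, ?_⟩
  · intro i; fin_cases i <;> norm_num
  · intro i; fin_cases i <;> norm_num
  · intro m; fin_cases m <;> rw [Fin.sum_univ_five] <;> norm_num [Matrix.cons_val_two, Matrix.cons_val_three,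
      Matrix.cons_val_four, Matrix.tail_cons, Matrix.head_cons]
  · intro j k hjk; fin_cases j <;> fin_cases k <;>
      first | (exact absurd rfl hjk) | norm_num

lemma goodB : Good11 ((1, ![-1,-1,-1,-1,-1], ![0,0,0,0,0]) : Vec11) := by
  refine ⟨by norm_num, ?_, ?_, ?_, ?_⟩
  · intro i; fin_cases i <;> norm_num
  · intro i; fin_cases i <;> norm_num
  · intro m; fin_cases m <;> rw [Fin.sum_univ_five] <;> norm_num [Matrix.cons_val_two, Matrix.cons_val_three,
      Matrix.cons_val_four, Matrix.tail_cons, Matrix.head_cons]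
  · intro j k hjk; fin_cases j <;> fin_cases k <;>
      first | (exact absurd rfl hjk) | norm_num

lemma goodC : Good11 ((2, ![-2,-2,-1,-1,-1], ![-1,-1,0,0,0]) : Vec11) := by
  refine ⟨by norm_num, ?_, ?_, ?_, ?_⟩
  · intro i; fin_cases i <;> norm_num
  · intro i; fin_cases i <;> norm_num
  · intro m; fin_cases m <;> rw [Fin.sum_univ_five] <;> norm_num [Matrix.cons_val_two, Matrix.cons_val_three,
      Matrix.cons_val_four, Matrix.tail_cons, Matrix.head_cons]
  · intro j k hjk; fin_cases j <;> fin_cases k <;>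
      first | (exact absurd rfl hjk) | norm_num

lemma goodD : Good11 ((3, ![-3,-3,-3,-2,-2], ![-1,-1,-1,0,0]) : Vec11) := by
  refine ⟨by norm_num, ?_, ?_, ?_, ?_⟩
  · intro i; fin_cases i <;> norm_num
  · intro i; fin_cases i <;> norm_num
  · intro m; fin_cases m <;> rw [Fin.sum_univ_five] <;> norm_num [Matrix.cons_val_two, Matrix.cons_val_three,
      Matrix.cons_val_four, Matrix.tail_cons, Matrix.head_cons]
  · intro j k hjk; fin_cases j <;> fin_cases k <;>
      first | (exact absurd rfl hjk) | norm_num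

lemma goodE : Good11 ((4, ![-4,-4,-4,-4,-4], ![-1,-1,-1,-1,-1]) : Vec11) := by
  refine ⟨by norm_num, ?_, ?_, ?_, ?_⟩
  · intro i; fin_cases i <;> norm_num
  · intro i; fin_cases i <;> norm_num
  · intro m; fin_cases m <;> rw [Fin.sum_univ_five] <;> norm_num [Matrix.cons_val_two, Matrix.cons_val_three,
      Matrix.cons_val_four, Matrix.tail_cons, Matrix.head_cons]
  · intro j k hjk; fin_cases j <;> fin_cases k <;>
      first | (exact absurd rfl hjk) | norm_num

end Aux

/-- Each of the classes α, β, γ, δ, ε (and every index-permutation thereof) pairs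
non-negatively with every class of a linear 2-dimensional subvariety, i.e. lies in
the dual of the linear cone of 2-cycles on the blowup of P^5 along 5 general
lines. -/
theorem stmt15 :
    ∀ d ∈ maxIncident11, ∀ s ∈ linClasses11, 0 ≤ interPair11 s d := by
  rintro d ⟨σ, h | h | h | h | h⟩ <;> subst h <;>
    exact fun s hs => good_pair _ (good_perm σ _ (by
      first | exact goodA | exact goodB | exact goodC | exact goodD | exact goodE)) s hs
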